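/- For every integer d ≥ 2, Dom has a winning strategy in the (d:1) biased Disjoint Domination Game on every finite simple graph without isolated vertices, in both the Dom-start and the Sepy-start versions. -/

import Mathlib

namespace DDG

variable {V : Type*}

/-- The closed neighborhood `N[v]` of a vertex `v`. -/
def closedNbhd (G : SimpleGraph V) (v : V) : Set V := insert v (G.neighborSet v)

/-- `D` is a dominating set of `G`: every vertex has a member of `D`
in its closed neighborhood. -/
def Dominates (G : SimpleGraph V) (D : Set V) : Prop :=
  ∀ v : V, (closedNbhd G v ∩ D).Nonempty

/-- A position of the game: the sets of purple and blue vertices. -/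
structure Pos (V : Type*) where
  purple : Set V
  blue : Set V

namespace Pos

/-- The vertex class of a color (`true` = purple, `false` = blue). -/
def colorSet (p : Pos V) (c : Bool) : Set V := if c then p.purple else p.blue

/-- The position obtained by coloring vertex `v` with color `c`. -/
def play (p : Pos V) (v : V) (c : Bool) : Pos V :=
  if c then ⟨insert v p.purple, p.blue⟩ else ⟨p.purple, insert v p.blue⟩

end Pos

/-- A legal move of the Disjoint Domination Game: select an uncolored vertex `v`
and a color `c` such that some `u ∈ N[v]` is not yet dominated in color `c`. -/
def LegalMove (G : SimpleGraph V) (p : Pos V) (v : V) (c : Bool) : Prop :=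
  v ∉ p.purple ∪ p.blue ∧ ∃ u ∈ closedNbhd G v, closedNbhd G u ∩ p.colorSet c = ∅

/-- End condition ⟨s⟩: some closed neighborhood is monochromatic; Sepy wins. -/
def SepyEnd (G : SimpleGraph V) (p : Pos V) : Prop :=
  ∃ v : V, closedNbhd G v ⊆ p.purple ∨ closedNbhd G v ⊆ p.blue

/-- End condition ⟨d⟩: both color classes are dominating sets; Dom wins. -/
def DomEnd (G : SimpleGraph V) (p : Pos V) : Prop :=
  Dominates G p.purple ∧ Dominates G p.blue

/-- `DomWins G turn p` : Dom has a winning strategy in the Disjoint Domination Game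
from position `p`, where `turn = true` iff it is Dom's move. -/
inductive DomWins (G : SimpleGraph V) : Bool → Pos V → Prop
  | terminal (turn : Bool) (p : Pos V) :
      ¬ SepyEnd G p → DomEnd G p → DomWins G turn p
  | domStep (p : Pos V) (v : V) (c : Bool) :
      ¬ SepyEnd G p → ¬ DomEnd G p → LegalMove G p v c →
      DomWins G false (p.play v c) → DomWins G true p
  | sepyStep (p : Pos V) :
      ¬ SepyEnd G p → ¬ DomEnd G p →
      (∃ v c, LegalMove G p v c) →
      (∀ v c, LegalMove G p v c → DomWins G true (p.play v c)) →
      DomWins G false p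

/-- `SepyWins G turn p` : Sepy has a winning strategy in the Disjoint Domination Game
from position `p`, where `turn = true` iff it is Dom's move. -/
inductive SepyWins (G : SimpleGraph V) : Bool → Pos V → Prop
  | terminal (turn : Bool) (p : Pos V) : SepyEnd G p → SepyWins G turn p
  | sepyStep (p : Pos V) (v : V) (c : Bool) :
      ¬ SepyEnd G p → ¬ DomEnd G p → LegalMove G p v c →
      SepyWins G true (p.play v c) → SepyWins G false p
  | domStep (p : Pos V) :
      ¬ SepyEnd G p → ¬ DomEnd G p →
      (∃ v c, LegalMove G p v c) →
      (∀ v c, LegalMove G p v c → SepyWins G false (p.play v c)) →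
      SepyWins G true p

end DDG


namespace DDG
/-- `DomWinsBiased G d st p` : Dom has a winning strategy in the `(d:1)` biased
Disjoint Domination Game from position `p`. The state `st` is `some k` when it is
Dom's move with `k` individual selections remaining in his current turn, and `none`
when it is Sepy's turn.  In each of his turns Dom sequentially makes exactly `d`
legal moves (or all remaining legal moves if fewer are available), while in each of
his turns Sepy makes at most one legal move (he may pass). -/
inductive DomWinsBiased (G : SimpleGraph V) (d : ℕ) : Option ℕ → Pos V → Prop
  | terminal (st : Option ℕ) (p : Pos V) :
      ¬ SepyEnd G p → DomEnd G p → DomWinsBiased G d st p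
  | domStep (k : ℕ) (p : Pos V) (v : V) (c : Bool) :
      ¬ SepyEnd G p → ¬ DomEnd G p → LegalMove G p v c →
      DomWinsBiased G d (if k = 0 then none else some k) (p.play v c) →
      DomWinsBiased G d (some (k + 1)) p
  | domOut (k : ℕ) (p : Pos V) :
      ¬ SepyEnd G p → ¬ DomEnd G p → (¬ ∃ v c, LegalMove G p v c) →
      DomWinsBiased G d none p →
      DomWinsBiased G d (some (k + 1)) p
  | sepyStep (p : Pos V) :
      ¬ SepyEnd G p → ¬ DomEnd G p →
      (∀ v c, LegalMove G p v c → DomWinsBiased G d (some d) (p.play v c)) →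
      DomWinsBiased G d (some d) p →
      DomWinsBiased G d none p
end DDG

open DDG

namespace DDG11

open DDG

variable {V : Type*}

section Defs

variable (G : SimpleGraph V) (p : Pos V)

/-- The set of uncolored vertices. -/
def Unc (p : Pos V) : Set V := {v | v ∉ p.purple ∪ p.blue}

/-- `y` is undominated in color `c`. -/
def cfree (c : Bool) (y : V) : Prop := closedNbhd G y ∩ p.colorSet c = ∅

/-- `u` is uncolored and can never legally receive color `c`. -/
def blocked (c : Bool) (u : V) : Prop :=
  u ∈ Unc p ∧ ∀ y ∈ closedNbhd G u, ¬ cfree G p c y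

/-- An alive threat of color `c` at `z`. -/
def alive (c : Bool) (z : V) : Prop :=
  z ∈ p.colorSet c ∧ closedNbhd G z ∩ p.colorSet (!c) = ∅

/-- The threat at `z` is permanently neutralized. -/
def secure (c : Bool) (z : V) : Prop := ∃ u ∈ closedNbhd G z, blocked G p c u

/-- Uncolored vertices in the closed neighborhood of `z`. -/
def uncN (z : V) : Set V := closedNbhd G z ∩ Unc p

def TwoUnc (z : V) : Prop := ∃ t₁ ∈ uncN G p z, ∃ t₂ ∈ uncN G p z, t₁ ≠ t₂

/-- All alive threats secure. -/
def SOK : Prop := ∀ c z, alive G p c z → secure G p c z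

/-- All alive threats secure except possibly `(x, γ)`, which has two uncolored
neighbors if alive and insecure. -/
def SExc (x : V) (γ : Bool) : Prop :=
  (∀ c z, alive G p c z → secure G p c z ∨ (z = x ∧ c = γ)) ∧
  (alive G p γ x → ¬ secure G p γ x → TwoUnc G p x)

def Disj (p : Pos V) : Prop := Disjoint p.purple p.blue

end Defs

section Basic

variable {G : SimpleGraph V} {p : Pos V}

lemma self_mem_closedNbhd (v : V) : v ∈ closedNbhd G v := Set.mem_insert _ _

lemma closedNbhd_comm {u v : V} (h : u ∈ closedNbhd G v) : v ∈ closedNbhd G u := by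
  rcases h with rfl | h
  · exact self_mem_closedNbhd u
  · exact Set.mem_insert_iff.2 (Or.inr (G.adj_symm h))

lemma mem_colorSet_or_unc (p : Pos V) (c : Bool) (y : V) :
    y ∈ Unc p ∨ y ∈ p.colorSet c ∨ y ∈ p.colorSet (!c) := by
  by_cases h : y ∈ p.purple ∪ p.blue
  · right
    rcases h with h | h <;> cases c <;> simp [Pos.colorSet] <;> tauto
  · exact Or.inl h

lemma colorSet_play_same (p : Pos V) (v : V) (c : Bool) :
    (p.play v c).colorSet c = insert v (p.colorSet c) := by
  cases c <;> simp [Pos.play, Pos.colorSet]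

lemma colorSet_play_other (p : Pos V) (v : V) {c c' : Bool} (h : c' ≠ c) :
    (p.play v c).colorSet c' = p.colorSet c' := by
  cases c <;> cases c' <;> simp_all [Pos.play, Pos.colorSet]

lemma colorSet_subset_play (p : Pos V) (v : V) (c c' : Bool) :
    p.colorSet c' ⊆ (p.play v c).colorSet c' := by
  by_cases h : c' = c
  · subst h; rw [colorSet_play_same]; exact Set.subset_insert _ _
  · rw [colorSet_play_other p v h]

lemma unc_play (p : Pos V) (v : V) (c : Bool) :
    Unc (p.play v c) = Unc p \ {v} := by
  ext y
  cases c <;>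
    simp [Unc, Pos.play, Set.mem_insert_iff, and_comm] <;> tauto

lemma uncN_play (G : SimpleGraph V) (p : Pos V) (v : V) (c : Bool) (z : V) :
    uncN G (p.play v c) z = uncN G p z \ {v} := by
  rw [uncN, uncN, unc_play, Set.inter_diff_assoc]

lemma disj_play {p : Pos V} {v : V} (c : Bool) (hd : Disj p) (hv : v ∈ Unc p) :
    Disj (p.play v c) := by
  have h1 : v ∉ p.purple := fun h => hv (Or.inl h)
  have h2 : v ∉ p.blue := fun h => hv (Or.inr h)
  cases c <;> simp [Disj, Pos.play, -Set.disjoint_insert_right, -Set.disjoint_insert_left] at hd ⊢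
  · exact Set.disjoint_left.2 (fun a ha hb => by
      rcases hb with rfl | hb
      · exact h1 ha
      · exact Set.disjoint_left.1 hd ha hb)
  · exact Set.disjoint_left.2 (fun a ha hb => by
      rcases ha with rfl | ha
      · exact h2 hb
      · exact Set.disjoint_left.1 hd ha hb)

end Basic

end DDG11

namespace DDG11

variable {V : Type*} {G : SimpleGraph V} {p : Pos V}

lemma sepyEnd_of_alive {c : Bool} {z : V} (ha : alive G p c z)
    (hu : uncN G p z = ∅) : SepyEnd G p := by
  have hsub : closedNbhd G z ⊆ p.colorSet c := by
    intro y hy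
    rcases mem_colorSet_or_unc p c y with h | h | h
    · exact absurd (Set.eq_empty_iff_forall_notMem.1 hu y ⟨hy, h⟩) not_false
    · exact h
    · exact absurd (Set.eq_empty_iff_forall_notMem.1 ha.2 y ⟨hy, h⟩) not_false
  refine ⟨z, ?_⟩
  cases c
  · exact Or.inr hsub
  · exact Or.inl hsub

lemma alive_of_sepyEnd (hdis : Disj p) (hse : SepyEnd G p) :
    ∃ c z, alive G p c z ∧ uncN G p z = ∅ := by
  obtain ⟨z, hz⟩ := hse
  have : ∃ c : Bool, closedNbhd G z ⊆ p.colorSet c := by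
    rcases hz with h | h
    · exact ⟨true, h⟩
    · exact ⟨false, h⟩
  obtain ⟨c, hsub⟩ := this
  refine ⟨c, z, ⟨hsub (self_mem_closedNbhd z), ?_⟩, ?_⟩
  · apply Set.eq_empty_iff_forall_notMem.2
    intro y ⟨hy1, hy2⟩
    have hyc := hsub hy1
    cases c
    · exact Set.disjoint_left.1 hdis hy2 hyc
    · exact Set.disjoint_left.1 hdis hyc hy2
  · apply Set.eq_empty_iff_forall_notMem.2
    intro y ⟨hy1, hy2⟩
    exact hy2 (by
      have := hsub hy1
      cases c
      · exact Or.inr this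
      · exact Or.inl this)

lemma uncN_nonempty {c : Bool} {z : V} (hns : ¬ SepyEnd G p)
    (ha : alive G p c z) : (uncN G p z).Nonempty := by
  by_contra h
  exact hns (sepyEnd_of_alive ha (Set.not_nonempty_iff_eq_empty.1 h))

lemma exists_legal (hns : ¬ SepyEnd G p) (hde : ¬ DomEnd G p) :
    ∃ v c, LegalMove G p v c := by
  have : ∃ c, ∃ z : V, closedNbhd G z ∩ p.colorSet c = ∅ := by
    rw [DomEnd, not_and_or] at hde
    rcases hde with h | h
    · rw [Dominates, not_forall] at h
      obtain ⟨z, hz⟩ := h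
      exact ⟨true, z, Set.not_nonempty_iff_eq_empty.1 hz⟩
    · rw [Dominates, not_forall] at h
      obtain ⟨z, hz⟩ := h
      exact ⟨false, z, Set.not_nonempty_iff_eq_empty.1 hz⟩
  obtain ⟨c, z, hz⟩ := this
  by_cases hu : (uncN G p z).Nonempty
  · obtain ⟨u, hu1, hu2⟩ := hu
    exact ⟨u, c, hu2, ⟨z, closedNbhd_comm hu1, hz⟩⟩
  · exfalso
    apply hns
    have hu' := Set.not_nonempty_iff_eq_empty.1 hu
    refine sepyEnd_of_alive (c := !c) (z := z) ⟨?_, ?_⟩ hu'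
    · rcases mem_colorSet_or_unc p c z with h | h | h
      · exact absurd (Set.eq_empty_iff_forall_notMem.1 hu' z
          ⟨self_mem_closedNbhd z, h⟩) not_false
      · exact absurd (Set.eq_empty_iff_forall_notMem.1 hz z
          ⟨self_mem_closedNbhd z, h⟩) not_false
      · exact h
    · rw [Bool.not_not]; exact hz

/-- New alive threats after a move: only at the played vertex with played color. -/
lemma alive_play_cases {v : V} {c₀ : Bool} {c : Bool} {z : V}
    (hv : v ∈ Unc p)
    (ha : alive G (p.play v c₀) c z) : (z = v ∧ c = c₀) ∨ alive G p c z := by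
  by_cases hc : c = c₀
  · subst hc
    have h1 := ha.1
    rw [colorSet_play_same] at h1
    rcases h1 with rfl | h1
    · exact Or.inl ⟨rfl, rfl⟩
    · refine Or.inr ⟨h1, ?_⟩
      have := ha.2
      rwa [colorSet_play_other p v (by cases c <;> simp)] at this
  · have hcc : c = !c₀ := by cases c <;> cases c₀ <;> simp_all
    refine Or.inr ⟨?_, ?_⟩
    · have h1 := ha.1
      rwa [colorSet_play_other p v hc] at h1
    · have h2 := ha.2
      rw [hcc, Bool.not_not, colorSet_play_same] at h2
      rw [hcc, Bool.not_not]
      exact Set.subset_empty_iff.1 ((Set.inter_subset_inter_right _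
        (Set.subset_insert _ _)).trans h2.subset)

/-- Security is robust under legal moves (for threats that stay alive). -/
lemma secure_play {v : V} {c₀ : Bool} {c : Bool} {z : V}
    (hleg : LegalMove G p v c₀)
    (hs : secure G p c z) (ha' : alive G (p.play v c₀) c z) :
    secure G (p.play v c₀) c z := by
  obtain ⟨u, hu, hub⟩ := hs
  by_cases huv : u = v
  · subst huv
    by_cases hcc : c₀ = c
    · subst hcc
      obtain ⟨w, hw1, hw2⟩ := hleg.2
      exact absurd hw2 (hub.2 w hw1)
    · exfalso
      have hcc' : c₀ = !c := by cases c <;> cases c₀ <;> simp_all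
      have : u ∈ closedNbhd G z ∩ (p.play u c₀).colorSet (!c) := by
        refine ⟨hu, ?_⟩
        rw [hcc', colorSet_play_same]
        exact Set.mem_insert _ _
      rw [ha'.2] at this
      exact this
  · refine ⟨u, hu, ⟨?_, ?_⟩⟩
    · rw [unc_play]
      exact ⟨hub.1, huv⟩
    · intro y hy hcf
      apply hub.2 y hy
      rw [cfree, Set.eq_empty_iff_forall_notMem] at hcf ⊢
      intro t ht
      exact hcf t ⟨ht.1, colorSet_subset_play p v c₀ c ht.2⟩

end DDG11

namespace DDG11

variable {V : Type*} {G : SimpleGraph V} {p : Pos V}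

lemma mem_unc_of_legal {v : V} {c : Bool} (hleg : LegalMove G p v c) : v ∈ Unc p :=
  hleg.1

/-- Key safety lemma: a legal move never creates a Sepy win, provided every
insecure alive threat of the move's color retains an uncolored vertex. -/
lemma notSepyEnd_play (hiso : ∀ v : V, ∃ u : V, G.Adj v u) (hdis : Disj p)
    {v : V} {c₀ : Bool} (hleg : LegalMove G p v c₀) (hns : ¬ SepyEnd G p)
    (hsafe : ∀ z, alive G p c₀ z → ¬ secure G p c₀ z → ∃ t ∈ uncN G p z, t ≠ v) :
    ¬ SepyEnd G (p.play v c₀) := by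
  intro hse'
  have hv : v ∈ Unc p := hleg.1
  have hdis' : Disj (p.play v c₀) := disj_play c₀ hdis hv
  obtain ⟨c, z, ha', hu'⟩ := alive_of_sepyEnd hdis' hse'
  rw [uncN_play] at hu'
  have hsub : uncN G p z ⊆ {v} := by
    intro t ht
    by_contra htv
    exact Set.eq_empty_iff_forall_notMem.1 hu' t ⟨ht, htv⟩
  rcases alive_play_cases hv ha' with ⟨rfl, rfl⟩ | ha
  · -- the move itself completed a monochromatic neighborhood: impossible
    obtain ⟨y, hadj⟩ := hiso z
    have hyN : y ∈ closedNbhd G z := Set.mem_insert_iff.2 (Or.inr hadj)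
    have hyne : y ≠ z := fun h => G.irrefl (v := z) (h ▸ hadj)
    have hyunc : y ∉ Unc p := fun h => hyne (hsub ⟨hyN, h⟩)
    have hyc : y ∈ p.colorSet c := by
      rcases mem_colorSet_or_unc p c y with h | h | h
      · exact absurd h hyunc
      · exact h
      · exfalso
        have : y ∈ closedNbhd G z ∩ (p.play z c).colorSet (!c) := by
          refine ⟨hyN, ?_⟩
          rwa [colorSet_play_other p z (by cases c <;> simp)]
        rw [ha'.2] at this
        exact this
    obtain ⟨w, hwN, hwfree⟩ := hleg.2
    rcases mem_colorSet_or_unc p c w with h | h | h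
    · have : w = z := hsub ⟨hwN, h⟩
      subst this
      exact Set.eq_empty_iff_forall_notMem.1 hwfree y ⟨hyN, hyc⟩
    · exact Set.eq_empty_iff_forall_notMem.1 hwfree w ⟨self_mem_closedNbhd w, h⟩
    · exfalso
      have : w ∈ closedNbhd G z ∩ (p.play z c).colorSet (!c) := by
        refine ⟨hwN, ?_⟩
        rwa [colorSet_play_other p z (by cases c <;> simp)]
      rw [ha'.2] at this
      exact this
  · by_cases hc : c = c₀
    · subst hc
      by_cases hsec : secure G p c z
      · obtain ⟨u, hu1, hub⟩ := hsec
        have : u = v := hsub ⟨hu1, hub.1⟩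
        subst this
        obtain ⟨w, hwN, hwfree⟩ := hleg.2
        exact hub.2 w hwN hwfree
      · obtain ⟨t, ht, htv⟩ := hsafe z ha hsec
        exact htv (hsub ht)
    · by_cases hvz : v ∈ closedNbhd G z
      · have hcc : c₀ = !c := by cases c <;> cases c₀ <;> simp_all
        have : v ∈ closedNbhd G z ∩ (p.play v c₀).colorSet (!c) := by
          refine ⟨hvz, ?_⟩
          rw [hcc, colorSet_play_same]
          exact Set.mem_insert _ _
        rw [ha'.2] at this
        exact this
      · apply hns
        refine sepyEnd_of_alive ha (Set.eq_empty_iff_forall_notMem.2 ?_)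
        intro t ht
        exact hvz ((hsub ht) ▸ ht.1)

lemma fix_legal {x u : V} {γ : Bool} (ha : alive G p γ x) (hu : u ∈ uncN G p x) :
    LegalMove G p u (!γ) :=
  ⟨hu.2, ⟨x, closedNbhd_comm hu.1, ha.2⟩⟩

/-- The result of Dom's "fix" move on an insecure alive threat. -/
lemma fix_step (hiso : ∀ v : V, ∃ u : V, G.Adj v u) (hdis : Disj p)
    (hns : ¬ SepyEnd G p)
    {x u : V} {γ : Bool} (ha : alive G p γ x)
    (hu : u ∈ uncN G p x)
    (hrest : ∀ z, alive G p (!γ) z → ¬ secure G p (!γ) z → ∃ t ∈ uncN G p z, t ≠ u) :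
    LegalMove G p u (!γ) ∧ Disj (p.play u (!γ)) ∧ ¬ SepyEnd G (p.play u (!γ)) ∧
      ∀ c z, alive G (p.play u (!γ)) c z →
        secure G (p.play u (!γ)) c z ∨
          (alive G p c z ∧ ¬ secure G p c z ∧ ¬ (z = x ∧ c = γ)) := by
  have hleg := fix_legal ha hu
  have hdis' := disj_play (!γ) hdis hu.2
  have hns' := notSepyEnd_play hiso hdis hleg hns hrest
  refine ⟨hleg, hdis', hns', ?_⟩
  intro c z ha'
  rcases alive_play_cases hu.2 ha' with ⟨rfl, rfl⟩ | haz
  · exfalso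
    have : x ∈ closedNbhd G z ∩ (p.play z (!γ)).colorSet (!(!γ)) := by
      refine ⟨closedNbhd_comm hu.1, ?_⟩
      rw [Bool.not_not, colorSet_play_other p z (by cases γ <;> simp)]
      exact ha.1
    rw [ha'.2] at this
    exact this
  · by_cases hx : z = x ∧ c = γ
    · exfalso
      obtain ⟨rfl, rfl⟩ := hx
      have : u ∈ closedNbhd G z ∩ (p.play u (!c)).colorSet (!c) := by
        refine ⟨hu.1, ?_⟩
        rw [colorSet_play_same]
        exact Set.mem_insert _ _
      rw [ha'.2] at this
      exact this
    · by_cases hsec : secure G p c z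
      · exact Or.inl (secure_play hleg hsec ha')
      · exact Or.inr ⟨haz, hsec, hx⟩

lemma notSepyEnd_of_SOK (hdis : Disj p) (h : SOK G p) : ¬ SepyEnd G p := by
  intro hse
  obtain ⟨c, z, ha, hu⟩ := alive_of_sepyEnd hdis hse
  obtain ⟨u, hu1, hub⟩ := h c z ha
  exact Set.eq_empty_iff_forall_notMem.1 hu u ⟨hu1, hub.1⟩

/-- Any legal move from a fully secure position. -/
lemma filler_step (hiso : ∀ v : V, ∃ u : V, G.Adj v u) (hdis : Disj p)
    (hSOK : SOK G p) {v : V} {c : Bool} (hleg : LegalMove G p v c) :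
    Disj (p.play v c) ∧ ¬ SepyEnd G (p.play v c) ∧
      ∀ c' z, alive G (p.play v c) c' z →
        secure G (p.play v c) c' z ∨ (z = v ∧ c' = c) := by
  have hns := notSepyEnd_of_SOK hdis hSOK
  have hns' := notSepyEnd_play hiso hdis hleg hns
    (fun z ha hin => absurd (hSOK _ _ ha) hin)
  refine ⟨disj_play c hdis hleg.1, hns', ?_⟩
  intro c' z ha'
  rcases alive_play_cases hleg.1 ha' with h | haz
  · exact Or.inr h
  · exact Or.inl (secure_play hleg (hSOK _ _ haz) ha')

end DDG11

namespace DDG11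

variable {V : Type*} {G : SimpleGraph V} {p : Pos V}

/-- If any legal move exists from a fully secure position, then some legal move
leads to a position that is secure with at most one exception, the exception
having two uncolored neighbors if alive and insecure. -/
lemma safe_move (hiso : ∀ v : V, ∃ u : V, G.Adj v u) (hdis : Disj p)
    (hSOK : SOK G p) {x : V} {γ : Bool} (hleg : LegalMove G p x γ) :
    ∃ v c, LegalMove G p v c ∧ Disj (p.play v c) ∧ ¬ SepyEnd G (p.play v c) ∧
      SExc G (p.play v c) v c := by
  have fs1 := filler_step hiso hdis hSOK hleg
  by_cases hbad1 : alive G (p.play x γ) γ x ∧ ¬ secure G (p.play x γ) γ x ∧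
      ¬ TwoUnc G (p.play x γ) x
  case neg =>
    exact ⟨x, γ, hleg, fs1.1, fs1.2.1, fs1.2.2,
      fun h1 h2 => by
        by_contra hT
        exact hbad1 ⟨h1, h2, hT⟩⟩
  case pos =>
  -- candidate 1 is doomed; extract the unique uncolored neighbor u of x
  obtain ⟨u, hu⟩ : (uncN G (p.play x γ) x).Nonempty := uncN_nonempty fs1.2.1 hbad1.1
  have huUnc1 : u ∈ Unc (p.play x γ) := hu.2
  rw [unc_play] at huUnc1
  have huUncp : u ∈ Unc p := huUnc1.1
  have hux : u ≠ x := huUnc1.2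
  have hexy : ∃ y ∈ closedNbhd G u, cfree G (p.play x γ) γ y := by
    by_contra hno
    push_neg at hno
    exact hbad1.2.1 ⟨u, hu.1, hu.2, fun y hy => hno y hy⟩
  obtain ⟨y, hyu, hycf⟩ := hexy
  have hxNy : x ∉ closedNbhd G y := by
    intro hxy
    have hmem : x ∈ closedNbhd G y ∩ (p.play x γ).colorSet γ := by
      refine ⟨hxy, ?_⟩
      rw [colorSet_play_same]; exact Set.mem_insert _ _
    rw [hycf] at hmem; exact hmem
  have hycfp : cfree G p γ y := by
    rw [cfree, Set.eq_empty_iff_forall_notMem]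
    intro t ht
    have hmem : t ∈ closedNbhd G y ∩ (p.play x γ).colorSet γ := by
      refine ⟨ht.1, ?_⟩
      rw [colorSet_play_same]; exact Set.mem_insert_of_mem _ ht.2
    rw [hycf] at hmem; exact hmem
  -- candidate 2 : play u (!γ)
  have hxNu : x ∈ closedNbhd G u := closedNbhd_comm hu.1
  have hleg2 : LegalMove G p u (!γ) := by
    refine ⟨huUncp, ⟨x, hxNu, ?_⟩⟩
    have h2 := hbad1.1.2
    rwa [colorSet_play_other p x (by cases γ <;> simp)] at h2
  have fs2 := filler_step hiso hdis hSOK hleg2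
  by_cases hbad2 : alive G (p.play u (!γ)) (!γ) u ∧ ¬ secure G (p.play u (!γ)) (!γ) u ∧
      ¬ TwoUnc G (p.play u (!γ)) u
  case neg =>
    exact ⟨u, !γ, hleg2, fs2.1, fs2.2.1, fs2.2.2,
      fun h1 h2 => by
        by_contra hT
        exact hbad2 ⟨h1, h2, hT⟩⟩
  case pos =>
  -- candidate 2 is doomed too; then y is a colored, γ-free vertex of color !γ
  have hxuncN2 : x ∈ uncN G (p.play u (!γ)) u := by
    refine ⟨hxNu, ?_⟩
    rw [unc_play]
    exact ⟨hleg.1, fun h => hux (by simpa using h.symm)⟩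
  have hyne_u : y ≠ u := fun h => hxNy (h ▸ hxNu)
  have hyne_x : y ≠ x := fun h => hxNy (by rw [h]; exact self_mem_closedNbhd x)
  have hycolored : y ∉ Unc p := by
    intro hyUnc
    have : y ∈ uncN G (p.play u (!γ)) u := by
      refine ⟨hyu, ?_⟩
      rw [unc_play]
      exact ⟨hyUnc, hyne_u⟩
    exact hyne_x (by
      by_contra hne
      exact hbad2.2.2 ⟨y, this, x, hxuncN2, hne⟩)
  have hyopp : y ∈ p.colorSet (!γ) := by
    rcases mem_colorSet_or_unc p γ y with h | h | h
    · exact absurd h hycolored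
    · exact absurd (Set.eq_empty_iff_forall_notMem.1 hycfp y
        ⟨self_mem_closedNbhd y, h⟩) not_false
    · exact h
  have hay : alive G p (!γ) y := by
    refine ⟨hyopp, ?_⟩
    rw [Bool.not_not]
    exact hycfp
  obtain ⟨s, hs1, hsb⟩ := hSOK (!γ) y hay
  -- candidate 3 : play s γ ; the new threat is dead on arrival thanks to y
  have hlegs : LegalMove G p s γ := ⟨hsb.1, ⟨y, closedNbhd_comm hs1, hycfp⟩⟩
  have fs3 := filler_step hiso hdis hSOK hlegs
  refine ⟨s, γ, hlegs, fs3.1, fs3.2.1, fs3.2.2, ?_⟩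
  intro ha3 _
  exfalso
  have hmem : y ∈ closedNbhd G s ∩ (p.play s γ).colorSet (!γ) := by
    refine ⟨closedNbhd_comm hs1, ?_⟩
    rw [colorSet_play_other p s (by cases γ <;> simp)]
    exact hyopp
  rw [ha3.2] at hmem
  exact hmem

end DDG11

namespace DDG11

variable {V : Type*}

/-- Damage descriptor: the set of possibly insecure alive threats Dom
still has to deal with during his current turn. -/
inductive Dmg (V : Type*) where
  | nil : Dmg V
  | one (x : V) (γ : Bool) : Dmg V
  | two (x₁ x₂ : V) (γ : Bool) : Dmg V
  | mixed (x : V) (γ : Bool) (v : V) : Dmg V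

def DSound (G : SimpleGraph V) (p : Pos V) : Dmg V → Prop
  | .nil => SOK G p
  | .one x γ => ∀ c z, alive G p c z → secure G p c z ∨ (z = x ∧ c = γ)
  | .two x₁ x₂ γ => ∀ c z, alive G p c z → secure G p c z ∨ (c = γ ∧ (z = x₁ ∨ z = x₂))
  | .mixed x γ v =>
      (∀ c z, alive G p c z → secure G p c z ∨ (z = x ∧ c = γ) ∨ (z = v ∧ c = !γ)) ∧
      (alive G p γ x → ¬ secure G p γ x → TwoUnc G p x)

def Dmg.big : Dmg V → Prop
  | .two _ _ _ => True
  | .mixed _ _ _ => True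
  | _ => False

variable {G : SimpleGraph V} {p : Pos V}

lemma notSepyEnd_of_SExc {x : V} {γ : Bool} (hdis : Disj p) (h : SExc G p x γ) :
    ¬ SepyEnd G p := by
  intro hse
  obtain ⟨c, z, ha, hu⟩ := alive_of_sepyEnd hdis hse
  rcases h.1 c z ha with hs | ⟨hzx, hcγ⟩
  · obtain ⟨u, hu1, hub⟩ := hs
    exact Set.eq_empty_iff_forall_notMem.1 hu u ⟨hu1, hub.1⟩
  · rw [hzx] at hu
    rw [hzx, hcγ] at ha
    by_cases hsec : secure G p γ x
    · obtain ⟨u, hu1, hub⟩ := hsec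
      exact Set.eq_empty_iff_forall_notMem.1 hu u ⟨hu1, hub.1⟩
    · obtain ⟨t, ht, _, _, _⟩ := h.2 ha hsec
      exact Set.eq_empty_iff_forall_notMem.1 hu t ht

theorem master [Fintype V] (G : SimpleGraph V) (hiso : ∀ v : V, ∃ u : V, G.Adj v u)
    (d : ℕ) (hd : 2 ≤ d) :
    ∀ n : ℕ, ∀ p : Pos V, (Unc p).ncard = n → Disj p →
      ((∀ (k : ℕ) (D : Dmg V), DSound G p D → ¬ SepyEnd G p → (D.big → 1 ≤ k) →
          DomWinsBiased G d (some (k + 1)) p)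
       ∧ ((SOK G p ∨ ∃ x γ, SExc G p x γ) → DomWinsBiased G d none p)) := by
  intro n
  induction n using Nat.strong_induction_on with
  | _ n ih =>
  intro p hn hdis
  -- recursion after one move
  have IH : ∀ (v : V) (c : Bool), v ∈ Unc p → Disj (p.play v c) →
      ((∀ (k : ℕ) (D : Dmg V), DSound G (p.play v c) D → ¬ SepyEnd G (p.play v c) →
          (D.big → 1 ≤ k) → DomWinsBiased G d (some (k + 1)) (p.play v c))
       ∧ ((SOK G (p.play v c) ∨ ∃ x γ, SExc G (p.play v c) x γ) →
          DomWinsBiased G d none (p.play v c))) := by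
    intro v c hv hdisj
    refine ih ((Unc (p.play v c)).ncard) ?_ _ rfl hdisj
    rw [← hn, unc_play]
    exact Set.ncard_diff_singleton_lt_of_mem hv (Set.toFinite _)
  have hP2 : ∀ (k : ℕ) (D : Dmg V), DSound G p D → ¬ SepyEnd G p → (D.big → 1 ≤ k) →
      DomWinsBiased G d (some (k + 1)) p := by
    intro k D hD hns hbig
    by_cases hde : DomEnd G p
    · exact DomWinsBiased.terminal _ _ hns hde
    obtain ⟨v₀, c₀, hleg₀⟩ := exists_legal hns hde
    -- the case of no pending exceptions
    have hnoneCase : ∀ (k : ℕ), SOK G p → DomWinsBiased G d (some (k + 1)) p := by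
      intro k hSOK
      cases k with
      | zero =>
        obtain ⟨v, c, hleg, hdisj', hns', hexc⟩ := safe_move hiso hdis hSOK hleg₀
        apply DomWinsBiased.domStep 0 p v c hns hde hleg
        rw [if_pos rfl]
        exact (IH v c hleg.1 hdisj').2 (Or.inr ⟨v, c, hexc⟩)
      | succ k' =>
        have fs := filler_step hiso hdis hSOK hleg₀
        apply DomWinsBiased.domStep (k' + 1) p v₀ c₀ hns hde hleg₀
        rw [if_neg (Nat.succ_ne_zero k')]
        exact (IH v₀ c₀ hleg₀.1 fs.1).1 k' (.one v₀ c₀) fs.2.2 fs.2.1 (fun h => h.elim)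
    -- the case of a single pending exception
    have honeCase : ∀ (k : ℕ) (x : V) (γ : Bool),
        (∀ c z, alive G p c z → secure G p c z ∨ (z = x ∧ c = γ)) →
        DomWinsBiased G d (some (k + 1)) p := by
      intro k x γ hD1
      by_cases hlive : alive G p γ x ∧ ¬ secure G p γ x
      · obtain ⟨u, hu⟩ := uncN_nonempty hns hlive.1
        have hrest : ∀ z, alive G p (!γ) z → ¬ secure G p (!γ) z →
            ∃ t ∈ uncN G p z, t ≠ u := by
          intro z hz hzin
          rcases hD1 (!γ) z hz with hs | ⟨rfl, hc⟩
          · exact absurd hs hzin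
          · exact absurd hc (by cases γ <;> simp)
        have fix := fix_step hiso hdis hns hlive.1 hu hrest
        have hSOK' : SOK G (p.play u (!γ)) := by
          intro c z ha'
          rcases fix.2.2.2 c z ha' with hs | ⟨hap, hinsp, hne⟩
          · exact hs
          · rcases hD1 c z hap with hs | hzx
            · exact absurd hs hinsp
            · exact absurd hzx hne
        apply DomWinsBiased.domStep k p u (!γ) hns hde fix.1
        cases k with
        | zero =>
          rw [if_pos rfl]
          exact (IH u (!γ) fix.1.1 fix.2.1).2 (Or.inl hSOK')
        | succ k' =>
          rw [if_neg (Nat.succ_ne_zero k')]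
          exact (IH u (!γ) fix.1.1 fix.2.1).1 k' .nil hSOK' fix.2.2.1 (fun h => h.elim)
      · refine hnoneCase k (fun c z ha => ?_)
        rcases hD1 c z ha with hs | ⟨rfl, rfl⟩
        · exact hs
        · by_contra hsec
          exact hlive ⟨ha, hsec⟩
    -- dispatch on the damage descriptor
    cases D with
    | nil => exact hnoneCase k hD
    | one x γ => exact honeCase k x γ hD
    | two x₁ x₂ γ =>
      by_cases hlive1 : alive G p γ x₁ ∧ ¬ secure G p γ x₁
      · obtain ⟨k', rfl⟩ : ∃ k', k = k' + 1 := by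
          have := hbig trivial
          exact ⟨k - 1, by omega⟩
        obtain ⟨u, hu⟩ := uncN_nonempty hns hlive1.1
        have hrest : ∀ z, alive G p (!γ) z → ¬ secure G p (!γ) z →
            ∃ t ∈ uncN G p z, t ≠ u := by
          intro z hz hzin
          rcases hD (!γ) z hz with hs | ⟨hc, _⟩
          · exact absurd hs hzin
          · exact absurd hc (by cases γ <;> simp)
        have fix := fix_step hiso hdis hns hlive1.1 hu hrest
        have hsound' : ∀ c z, alive G (p.play u (!γ)) c z →
            secure G (p.play u (!γ)) c z ∨ (z = x₂ ∧ c = γ) := by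
          intro c z ha'
          rcases fix.2.2.2 c z ha' with hs | ⟨hap, hinsp, hne⟩
          · exact Or.inl hs
          · rcases hD c z hap with hs | ⟨rfl, hz12⟩
            · exact absurd hs hinsp
            · rcases hz12 with rfl | rfl
              · exact absurd ⟨rfl, rfl⟩ hne
              · exact Or.inr ⟨rfl, rfl⟩
        apply DomWinsBiased.domStep (k' + 1) p u (!γ) hns hde fix.1
        rw [if_neg (Nat.succ_ne_zero k')]
        exact (IH u (!γ) fix.1.1 fix.2.1).1 k' (.one x₂ γ) hsound' fix.2.2.1
          (fun h => h.elim)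
      · refine honeCase k x₂ γ (fun c z ha => ?_)
        rcases hD c z ha with hs | ⟨rfl, hz12⟩
        · exact Or.inl hs
        · rcases hz12 with rfl | rfl
          · left
            by_contra hsec
            exact hlive1 ⟨ha, hsec⟩
          · exact Or.inr ⟨rfl, rfl⟩
    | mixed x γ v =>
      obtain ⟨hD1, hDevid⟩ := hD
      by_cases hlivev : alive G p (!γ) v ∧ ¬ secure G p (!γ) v
      · obtain ⟨k', rfl⟩ : ∃ k', k = k' + 1 := by
          have := hbig trivial
          exact ⟨k - 1, by omega⟩
        obtain ⟨u, hu⟩ := uncN_nonempty hns hlivev.1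
        have hrest : ∀ z, alive G p (!(!γ)) z → ¬ secure G p (!(!γ)) z →
            ∃ t ∈ uncN G p z, t ≠ u := by
          simp only [Bool.not_not]
          intro z hz hzin
          rcases hD1 γ z hz with hs | hcase
          · exact absurd hs hzin
          · rcases hcase with ⟨rfl, _⟩ | ⟨rfl, hc⟩
            · obtain ⟨t₁, ht₁, t₂, ht₂, hne⟩ := hDevid hz hzin
              by_cases h1 : t₁ = u
              · exact ⟨t₂, ht₂, fun h => hne (by rw [h1, h])⟩
              · exact ⟨t₁, ht₁, h1⟩
            · exact absurd hc (by cases γ <;> simp)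
        have fix := fix_step hiso hdis hns hlivev.1 hu hrest
        simp only [Bool.not_not] at fix
        have hsound' : ∀ c z, alive G (p.play u γ) c z →
            secure G (p.play u γ) c z ∨ (z = x ∧ c = γ) := by
          intro c z ha'
          rcases fix.2.2.2 c z ha' with hs | ⟨hap, hinsp, hne⟩
          · exact Or.inl hs
          · rcases hD1 c z hap with hs | hcase
            · exact absurd hs hinsp
            · rcases hcase with ⟨rfl, rfl⟩ | ⟨rfl, rfl⟩
              · exact Or.inr ⟨rfl, rfl⟩
              · exact absurd ⟨rfl, rfl⟩ hne
        apply DomWinsBiased.domStep (k' + 1) p u γ hns hde fix.1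
        rw [if_neg (Nat.succ_ne_zero k')]
        exact (IH u γ fix.1.1 fix.2.1).1 k' (.one x γ) hsound' fix.2.2.1
          (fun h => h.elim)
      · refine honeCase k x γ (fun c z ha => ?_)
        rcases hD1 c z ha with hs | hcase
        · exact Or.inl hs
        · rcases hcase with h | ⟨rfl, rfl⟩
          · exact Or.inr h
          · left
            by_contra hsec
            exact hlivev ⟨ha, hsec⟩
  -- Sepy-to-move part
  have hP1 : (SOK G p ∨ ∃ x γ, SExc G p x γ) → DomWinsBiased G d none p := by
    intro hS
    have hns : ¬ SepyEnd G p := by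
      rcases hS with h | ⟨x, γ, hx⟩
      · exact notSepyEnd_of_SOK hdis h
      · exact notSepyEnd_of_SExc hdis hx
    by_cases hde : DomEnd G p
    · exact DomWinsBiased.terminal _ _ hns hde
    obtain ⟨k, hk⟩ : ∃ k, d = k + 1 := ⟨d - 1, by omega⟩
    have hk1 : 1 ≤ k := by omega
    have hsd : (some (k + 1) : Option ℕ) = some d := by rw [hk]
    apply DomWinsBiased.sepyStep p hns hde
    · -- Sepy moves
      intro v c hleg
      refine hsd ▸ ?_
      have hdis' := disj_play c hdis hleg.1
      rcases hS with hSOK | ⟨x, γ, hx1, hx2⟩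
      · have fs := filler_step hiso hdis hSOK hleg
        exact (IH v c hleg.1 hdis').1 k (.one v c) fs.2.2 fs.2.1 (fun h => h.elim)
      · have hsafe : ∀ z, alive G p c z → ¬ secure G p c z →
            ∃ t ∈ uncN G p z, t ≠ v := by
          intro z hz hzin
          rcases hx1 c z hz with hs | ⟨rfl, rfl⟩
          · exact absurd hs hzin
          · obtain ⟨t₁, ht₁, t₂, ht₂, hne⟩ := hx2 hz hzin
            by_cases h1 : t₁ = v
            · exact ⟨t₂, ht₂, fun h => hne (by rw [h1, h])⟩
            · exact ⟨t₁, ht₁, h1⟩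
        have hns' := notSepyEnd_play hiso hdis hleg hns hsafe
        by_cases hx' : alive G (p.play v c) γ x ∧ ¬ secure G (p.play v c) γ x
        · by_cases hcγ : c = γ
          · subst hcγ
            have hsound : ∀ c' z, alive G (p.play v c) c' z →
                secure G (p.play v c) c' z ∨ (c' = c ∧ (z = x ∨ z = v)) := by
              intro c' z ha'
              rcases alive_play_cases hleg.1 ha' with ⟨rfl, rfl⟩ | hap
              · exact Or.inr ⟨rfl, Or.inr rfl⟩
              · rcases hx1 c' z hap with hs | ⟨rfl, rfl⟩
                · exact Or.inl (secure_play hleg hs ha')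
                · exact Or.inr ⟨rfl, Or.inl rfl⟩
            exact (IH v c hleg.1 hdis').1 k (.two x v c) hsound hns' (fun _ => hk1)
          · have hcc : c = !γ := by cases c <;> cases γ <;> simp_all
            have hvNx : v ∉ closedNbhd G x := by
              intro hvx
              have hmem : v ∈ closedNbhd G x ∩ (p.play v c).colorSet (!γ) := by
                refine ⟨hvx, ?_⟩
                rw [hcc, colorSet_play_same]
                exact Set.mem_insert _ _
              rw [hx'.1.2] at hmem
              exact hmem
            have hapx : alive G p γ x := by
              rcases alive_play_cases hleg.1 hx'.1 with ⟨rfl, rfl⟩ | hap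
              · exact absurd rfl hcγ
              · exact hap
            have hsound1 : ∀ c' z, alive G (p.play v c) c' z →
                secure G (p.play v c) c' z ∨ (z = x ∧ c' = γ) ∨ (z = v ∧ c' = !γ) := by
              intro c' z ha'
              rcases alive_play_cases hleg.1 ha' with ⟨rfl, rfl⟩ | hap
              · exact Or.inr (Or.inr ⟨rfl, hcc⟩)
              · rcases hx1 c' z hap with hs | ⟨rfl, rfl⟩
                · exact Or.inl (secure_play hleg hs ha')
                · exact Or.inr (Or.inl ⟨rfl, rfl⟩)
            have hsound2 : alive G (p.play v c) γ x → ¬ secure G (p.play v c) γ x →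
                TwoUnc G (p.play v c) x := by
              intro _ _
              have hinsx : ¬ secure G p γ x := by
                intro hs
                exact hx'.2 (secure_play hleg hs hx'.1)
              obtain ⟨t₁, ht₁, t₂, ht₂, hne⟩ := hx2 hapx hinsx
              have hmem : ∀ t, t ∈ uncN G p x → t ∈ uncN G (p.play v c) x := by
                intro t ht
                rw [uncN_play]
                exact ⟨ht, fun h => hvNx (by rw [← h]; exact ht.1)⟩
              exact ⟨t₁, hmem t₁ ht₁, t₂, hmem t₂ ht₂, hne⟩
            exact (IH v c hleg.1 hdis').1 k (.mixed x γ v) ⟨hsound1, hsound2⟩ hns'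
              (fun _ => hk1)
        · have hsound : ∀ c' z, alive G (p.play v c) c' z →
              secure G (p.play v c) c' z ∨ (z = v ∧ c' = c) := by
            intro c' z ha'
            rcases alive_play_cases hleg.1 ha' with h | hap
            · exact Or.inr h
            · rcases hx1 c' z hap with hs | ⟨rfl, rfl⟩
              · exact Or.inl (secure_play hleg hs ha')
              · left
                by_contra hsec
                exact hx' ⟨ha', hsec⟩
          exact (IH v c hleg.1 hdis').1 k (.one v c) hsound hns' (fun h => h.elim)
    · -- Sepy passes
      refine hsd ▸ ?_
      rcases hS with hSOK | ⟨x, γ, hx1, _⟩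
      · exact hP2 k .nil hSOK hns (fun h => h.elim)
      · exact hP2 k (.one x γ) hx1 hns (fun h => h.elim)
  exact ⟨hP2, hP1⟩

end DDG11



/-- for every `d ≥ 2`, Dom has a winning strategy in the `(d:1)`
biased Disjoint Domination Game on every finite isolate-free graph, in both the
Dom-start and the Sepy-start versions. -/
theorem statement11 {V : Type*} [Fintype V] (d : ℕ) (hd : 2 ≤ d)
    (G : SimpleGraph V) (hiso : ∀ v : V, ∃ u : V, G.Adj v u) :
    DomWinsBiased G d (some d) ⟨∅, ∅⟩ ∧ DomWinsBiased G d none ⟨∅, ∅⟩ := by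
  set p0 : Pos V := ⟨∅, ∅⟩ with hp0
  have hdis : DDG11.Disj p0 := by simp [DDG11.Disj, hp0]
  have hSOK : DDG11.SOK G p0 := by
    intro c z ha
    exact absurd ha.1 (by cases c <;> simp [Pos.colorSet, hp0])
  have hns : ¬ SepyEnd G p0 := DDG11.notSepyEnd_of_SOK hdis hSOK
  have hm := DDG11.master G hiso d hd ((DDG11.Unc p0).ncard) p0 rfl hdis
  constructor
  · obtain ⟨k, hk⟩ : ∃ k, d = k + 1 := ⟨d - 1, by omega⟩
    have hsd : (some (k + 1) : Option ℕ) = some d := by rw [hk]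
    exact hsd ▸ hm.1 k .nil hSOK hns (fun h => h.elim)
  · exact hm.2 (Or.inl hSOK)
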